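/- arXiv:2206.12757 — 2 statements merged into one kernel-verified Lean document; each statement's English description precedes it below -/
import Mathlib

section
/- Let n ≥ 2 be an integer and b a real number. For the Randers choice φ(s) = 1 + s, with T(s) = φ(s)·(φ(s) − s·φ′(s))^(n−2)·((φ(s) − s·φ′(s)) + (b² − s²)·φ″(s)), one has ∫₀^π T(b·cos t)·(sin t)^(n−2) dt = ∫₀^π (sin t)^(n−2) dt; hence the Holmes–Thompson volume form of the Randers metric F = α + β coincides with the Riemannian volume form of α. -/
open Real intervalIntegral

lemma aux_cos_sin_pow (m : ℕ) :
    (∫ t in (0:ℝ)..π, Real.cos t * Real.sin t ^ m) = 0 := by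
  have h : ∀ t ∈ Set.uIcc (0:ℝ) π,
      HasDerivAt (fun t => Real.sin t ^ (m + 1) / (m + 1))
        (Real.cos t * Real.sin t ^ m) t := by
    intro t _
    have h1 : HasDerivAt Real.sin (Real.cos t) t := Real.hasDerivAt_sin t
    have h2 := (h1.pow (m + 1))
    have := h2.div_const ((m : ℝ) + 1)
    refine this.congr_deriv ?_
    rw [div_eq_iff (by positivity)]
    simp only [Nat.add_sub_cancel, Nat.cast_add, Nat.cast_one]
    ring
  have hint : IntervalIntegrable (fun t => Real.cos t * Real.sin t ^ m)
      MeasureTheory.volume 0 π := by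
    apply Continuous.intervalIntegrable
    continuity
  have := intervalIntegral.integral_eq_sub_of_hasDerivAt h hint
  simpa using this

/-- For the Randers choice `φ(s) = 1 + s`, with `T` the Holmes–Thompson density,
`∫₀^π T(b·cos t)·(sin t)^(n−2) dt = ∫₀^π (sin t)^(n−2) dt`; hence the Holmes–Thompson
volume form of the Randers metric coincides with the Riemannian volume form of `α`. -/
theorem randers_holmesThompson_integral_eq (n : ℕ) (hn : 2 ≤ n) (b : ℝ)
    (φ : ℝ → ℝ) (hφ : ∀ s, φ s = 1 + s)
    (T : ℝ → ℝ)
    (hT : ∀ s, T s = φ s * (φ s - s * deriv φ s) ^ (n - 2) *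
      ((φ s - s * deriv φ s) + (b ^ 2 - s ^ 2) * deriv (deriv φ) s)) :
    (∫ t in (0:ℝ)..π, T (b * Real.cos t) * Real.sin t ^ (n - 2)) =
      ∫ t in (0:ℝ)..π, Real.sin t ^ (n - 2) := by
  have hφf : φ = fun s => 1 + s := funext hφ
  have hd : ∀ s, deriv φ s = 1 := by
    intro s; rw [hφf]
    simpa using ((hasDerivAt_id s).const_add 1).deriv
  have hdf : deriv φ = fun _ => 1 := funext hd
  have hTs : ∀ s, T s = 1 + s := by
    intro s
    rw [hT, hφ, hdf]
    simp
  have key : (∫ t in (0:ℝ)..π, T (b * Real.cos t) * Real.sin t ^ (n - 2))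
      = (∫ t in (0:ℝ)..π, Real.sin t ^ (n - 2))
        + b * ∫ t in (0:ℝ)..π, Real.cos t * Real.sin t ^ (n - 2) := by
    rw [← intervalIntegral.integral_const_mul, ← intervalIntegral.integral_add]
    · apply intervalIntegral.integral_congr
      intro t _
      simp only [hTs]
      ring
    · apply Continuous.intervalIntegrable; continuity
    · apply Continuous.intervalIntegrable; continuity
  rw [key, aux_cos_sin_pow]
  ring
end

section
/- Let n ≥ 2 be an integer and let b be a real number with |b| < 1. Then ∫₀^π (sin t)^(n−2) / (1 + b·cos t)^n dt = (1 − b²)^(−(n+1)/2) · ∫₀^π (sin t)^(n−2) dt; equivalently, the Busemann–Hausdorff normalization factor of the Randers metric (φ(s) = 1 + s) is f_BH(b) = (1 − b²)^((n+1)/2). -/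
open Real intervalIntegral Set

lemma sin_pow_cos_int (k : ℕ) : (∫ s in (0:ℝ)..π, Real.sin s ^ k * Real.cos s) = 0 := by
  have h : ∀ t ∈ Set.uIcc (0:ℝ) π, HasDerivAt (fun y => Real.sin y ^ (k+1) / (k+1))
      (Real.sin t ^ k * Real.cos t) t := by
    intro t _
    have h1 : HasDerivAt (fun y => Real.sin y ^ (k+1)) ((k+1) * Real.sin t ^ k * Real.cos t) t := by
      simpa using (Real.hasDerivAt_sin t).fun_pow (k+1)
    have := h1.div_const ((k:ℝ)+1)
    have : ((k:ℝ)+1) ≠ 0 := by positivity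
    rw [show Real.sin t ^ k * Real.cos t = (k+1) * Real.sin t ^ k * Real.cos t / ((k:ℝ)+1) by field_simp]
    exact ‹HasDerivAt _ _ _›
  rw [integral_eq_sub_of_hasDerivAt h (((Real.continuous_sin.pow k).mul Real.continuous_cos).intervalIntegrable _ _)]
  simp

lemma randers_aux (k : ℕ) (b : ℝ) (hb : |b| < 1) :
    (∫ t in (0:ℝ)..π, Real.sin t ^ k / (1 + b * Real.cos t) ^ (k+2)) =
      (Real.sqrt (1 - b^2) ^ (k+3))⁻¹ * ∫ t in (0:ℝ)..π, Real.sin t ^ k := by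
  obtain ⟨hb1, hb2⟩ := abs_lt.1 hb
  have hb2' : 0 < 1 - b^2 := by nlinarith
  set r := Real.sqrt (1 - b^2) with hrdef
  have hr : 0 < r := Real.sqrt_pos.mpr hb2'
  have hr2 : r^2 = 1 - b^2 := Real.sq_sqrt hb2'.le
  have habs : ∀ s : ℝ, |b * Real.cos s| < 1 := by
    intro s
    rw [abs_mul]
    calc |b| * |Real.cos s| ≤ |b| * 1 := by gcongr; exact Real.abs_cos_le_one s
      _ = |b| := mul_one _
      _ < 1 := hb
  have hD : ∀ s : ℝ, 0 < 1 - b * Real.cos s := by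
    intro s
    have := (abs_lt.1 (habs s)).2
    linarith
  have hDp : ∀ s : ℝ, 0 < 1 + b * Real.cos s := by
    intro s
    have := (abs_lt.1 (habs s)).1
    linarith
  set v : ℝ → ℝ := fun s => (Real.cos s - b) / (1 - b * Real.cos s) with hv
  set f : ℝ → ℝ := fun s => Real.arccos (v s) with hf
  set f' : ℝ → ℝ := fun s => r / (1 - b * Real.cos s) with hf'
  set g : ℝ → ℝ := fun t => Real.sin t ^ k / (1 + b * Real.cos t) ^ (k+2) with hg
  have hu1 : ∀ s : ℝ, -1 ≤ v s := by
    intro s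
    rw [hv, le_div_iff₀ (hD s)]
    nlinarith [Real.neg_one_le_cos s]
  have hu2 : ∀ s : ℝ, v s ≤ 1 := by
    intro s
    rw [hv, div_le_one (hD s)]
    nlinarith [Real.cos_le_one s]
  have hsin2 : ∀ s : ℝ, Real.sin s ^ 2 = 1 - Real.cos s ^ 2 := by
    intro s; nlinarith [Real.sin_sq_add_cos_sq s]
  -- sqrt computation
  have hsq : ∀ s : ℝ, 0 ≤ Real.sin s → Real.sqrt (1 - v s ^ 2) = r * Real.sin s / (1 - b * Real.cos s) := by
    intro s hs
    have key : 1 - v s ^ 2 = (r * Real.sin s / (1 - b * Real.cos s))^2 := by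
      rw [hv]
      have hDne : (1 - b * Real.cos s) ≠ 0 := (hD s).ne'
      have hDne' : 1 - Real.cos s * b ≠ 0 := by rwa [mul_comm] at hDne
      field_simp
      linear_combination (-(1 - Real.cos s^2)) * hr2 - r^2 * hsin2 s
    rw [key, Real.sqrt_sq (div_nonneg (mul_nonneg hr.le hs) (hD s).le)]
  -- continuity
  have hvc : Continuous v := by
    apply (Real.continuous_cos.sub continuous_const).div
      (continuous_const.sub (continuous_const.mul Real.continuous_cos))
    exact fun s => (hD s).ne'
  have hfc : Continuous f := Real.continuous_arccos.comp hvc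
  have hf'c : Continuous f' := continuous_const.div
      (continuous_const.sub (continuous_const.mul Real.continuous_cos)) (fun s => (hD s).ne')
  have hgc : Continuous g := by
    apply (Real.continuous_sin.pow k).div
      ((continuous_const.add (continuous_const.mul Real.continuous_cos)).pow (k+2))
    exact fun t => pow_ne_zero _ (hDp t).ne'
  -- derivative on interior
  have hderiv : ∀ s ∈ Set.Ioo (min (0:ℝ) π) (max 0 π), HasDerivWithinAt f (f' s) (Set.Ioi s) s := by
    rw [min_eq_left Real.pi_pos.le, max_eq_right Real.pi_pos.le]
    intro s hs
    have hsinpos : 0 < Real.sin s := Real.sin_pos_of_pos_of_lt_pi hs.1 hs.2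
    have hcos1 : Real.cos s < 1 := by
      nlinarith [hsin2 s, hsinpos]
    have hcosm1 : -1 < Real.cos s := by
      nlinarith [hsin2 s, hsinpos]
    have hu1' : -1 < v s := by
      rw [hv, lt_div_iff₀ (hD s)]
      nlinarith
    have hu2' : v s < 1 := by
      rw [hv, div_lt_one (hD s)]
      nlinarith
    have hvd : HasDerivAt v
        ((-Real.sin s * (1 - b * Real.cos s) - (Real.cos s - b) * (0 - b * (-Real.sin s))) /
          (1 - b * Real.cos s)^2) s := by
      exact ((Real.hasDerivAt_cos s).sub_const b).div
        ((hasDerivAt_const s (1:ℝ)).sub ((Real.hasDerivAt_cos s).const_mul b)) (hD s).ne'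
    have had := (Real.hasDerivAt_arccos hu1'.ne' hu2'.ne).comp s hvd
    have heq : -(1 / Real.sqrt (1 - v s ^ 2)) *
        ((-Real.sin s * (1 - b * Real.cos s) - (Real.cos s - b) * (0 - b * (-Real.sin s))) /
          (1 - b * Real.cos s)^2) = f' s := by
      rw [hsq s hsinpos.le, hf']
      have h1 : (1 - b * Real.cos s) ≠ 0 := (hD s).ne'
      rw [eq_div_iff h1]
      field_simp
      linear_combination (-Real.sin s) * hr2
    rw [heq] at had
    exact had.hasDerivWithinAt
  -- endpoints
  have hv0 : v 0 = 1 := by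
    simp only [hv, Real.cos_zero, mul_one]
    exact div_self (by intro h; linarith [sub_eq_zero.1 h])
  have hvpi : v π = -1 := by
    simp only [hv, Real.cos_pi, mul_neg_one, sub_neg_eq_add]
    rw [show (-1 : ℝ) - b = -(1 + b) by ring, neg_div,
      div_self (by intro h; nlinarith [h] : (1 : ℝ) + b ≠ 0)]
  have hf0 : f 0 = 0 := by simp only [hf]; rw [hv0, Real.arccos_one]
  have hfpi : f π = π := by simp only [hf]; rw [hvpi, Real.arccos_neg_one]
  -- substitution
  have sub := integral_comp_smul_deriv'' (a := (0:ℝ)) (b := π) hfc.continuousOn hderiv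
      hf'c.continuousOn (hgc.continuousOn)
  rw [hf0, hfpi] at sub
  -- pointwise identity
  have hpt : Set.EqOn (fun s => f' s • (g ∘ f) s)
      (fun s => (r ^ (k+3))⁻¹ * (Real.sin s ^ k * (1 - b * Real.cos s))) (Set.uIcc 0 π) := by
    intro s hs
    rw [Set.uIcc_of_le Real.pi_pos.le] at hs
    have hsin : 0 ≤ Real.sin s := Real.sin_nonneg_of_nonneg_of_le_pi hs.1 hs.2
    have hcosf : Real.cos (f s) = v s := Real.cos_arccos (hu1 s) (hu2 s)
    have hsinf : Real.sin (f s) = r * Real.sin s / (1 - b * Real.cos s) := by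
      rw [hf, Real.sin_arccos, hsq s hsin]
    have honep : 1 + b * Real.cos (f s) = r^2 / (1 - b * Real.cos s) := by
      have h1 : (1 - b * Real.cos s) ≠ 0 := (hD s).ne'
      rw [hcosf]
      simp only [hv]
      rw [hr2, eq_div_iff h1, add_mul, one_mul, mul_assoc, div_mul_cancel₀ _ h1]
      ring
    simp only [smul_eq_mul, Function.comp_apply, hg, hf']
    rw [hsinf, honep]
    have h1 : (1 - b * Real.cos s) ≠ 0 := (hD s).ne'
    have hrne : r ≠ 0 := hr.ne'
    field_simp
    rw [div_pow, div_pow]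
    field_simp
    ring
  rw [intervalIntegral.integral_congr hpt, intervalIntegral.integral_const_mul] at sub
  have hsplit : (∫ s in (0:ℝ)..π, Real.sin s ^ k * (1 - b * Real.cos s)) =
      ∫ s in (0:ℝ)..π, Real.sin s ^ k := by
    have h1 : (fun s => Real.sin s ^ k * (1 - b * Real.cos s)) =
        fun s => Real.sin s ^ k - b * (Real.sin s ^ k * Real.cos s) := by funext s; ring
    rw [h1, intervalIntegral.integral_sub (f := fun s => Real.sin s ^ k) (g := fun s => b * (Real.sin s ^ k * Real.cos s)) ((Real.continuous_sin.pow k).intervalIntegrable _ _)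
      ((continuous_const.mul ((Real.continuous_sin.pow k).mul Real.continuous_cos)).intervalIntegrable _ _),
      intervalIntegral.integral_const_mul, sin_pow_cos_int]
    ring
  rw [hsplit] at sub
  exact sub.symm

/-- For `n ≥ 2` and `|b| < 1`,
`∫₀^π (sin t)^(n−2)/(1 + b·cos t)^n dt = (1 − b²)^(−(n+1)/2) · ∫₀^π (sin t)^(n−2) dt`;
equivalently the Busemann–Hausdorff normalization factor of the Randers metric is
`f_BH(b) = (1 − b²)^((n+1)/2)` (real exponents). -/
theorem randers_busemannHausdorff_factor (n : ℕ) (hn : 2 ≤ n) (b : ℝ) (hb : |b| < 1) :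
    (∫ t in (0:ℝ)..π, Real.sin t ^ (n - 2) / (1 + b * Real.cos t) ^ n) =
      (1 - b ^ 2) ^ (-(((n : ℝ) + 1) / 2)) * ∫ t in (0:ℝ)..π, Real.sin t ^ (n - 2) ∧
    (∫ t in (0:ℝ)..π, Real.sin t ^ (n - 2)) /
      (∫ t in (0:ℝ)..π, Real.sin t ^ (n - 2) / (1 + b * Real.cos t) ^ n) =
      (1 - b ^ 2) ^ (((n : ℝ) + 1) / 2) := by
  obtain ⟨k, rfl⟩ : ∃ k, n = k + 2 := ⟨n - 2, by omega⟩
  obtain ⟨hb1, hb2⟩ := abs_lt.1 hb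
  have hb2' : 0 < 1 - b^2 := by nlinarith
  have hC : (1 - b ^ 2) ^ (-((((k + 2 : ℕ) : ℝ) + 1) / 2)) = (Real.sqrt (1 - b^2) ^ (k+3))⁻¹ := by
    rw [Real.rpow_neg hb2'.le]
    congr 1
    rw [Real.sqrt_eq_rpow, ← Real.rpow_natCast ((1 - b^2) ^ (1/(2:ℝ))) (k+3),
      ← Real.rpow_mul hb2'.le]
    congr 1
    push_cast
    ring
  have key := randers_aux k b hb
  have hk2 : k + 2 - 2 = k := by omega
  have hA : 0 < ∫ t in (0:ℝ)..π, Real.sin t ^ k := integral_sin_pow_pos k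
  constructor
  · rw [hk2, hC]
    exact key
  · rw [hk2, key]
    rw [mul_comm, div_mul_eq_div_div, div_self hA.ne', one_div, inv_inv]
    rw [Real.sqrt_eq_rpow, ← Real.rpow_natCast ((1 - b^2) ^ (1/(2:ℝ))) (k+3),
      ← Real.rpow_mul hb2'.le]
    congr 1
    push_cast
    ring
end
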